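/- For every nonzero integer k, v_σ^{2k} maps P into Q, and for every nonzero integer l, h_σ^{2l} maps Q into P, where P = h_σ⁻¹(Y) ∪ h_σ(X) and Q = v_σ(X) ∪ v_σ⁻¹(Y). -/

import Mathlib

open Set

noncomputable section

def hmap (σ : ℝ ≃ ℝ) : (ℝ × ℝ) ≃ (ℝ × ℝ) where
  toFun p := (p.1 + σ.symm p.2, p.2)
  invFun p := (p.1 - σ.symm p.2, p.2)
  left_inv p := by simp
  right_inv p := by simp

def vmap (σ : ℝ ≃ ℝ) : (ℝ × ℝ) ≃ (ℝ × ℝ) where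
  toFun p := (p.1, p.2 + σ p.1)
  invFun p := (p.1, p.2 - σ p.1)
  left_inv p := by simp
  right_inv p := by simp

def Xset : Set (ℝ × ℝ) := {p | p ≠ 0 ∧ 0 ≤ p.1 * p.2 ∧ p.1 ≠ 0}
def Yset : Set (ℝ × ℝ) := {p | p ≠ 0 ∧ p.1 * p.2 ≤ 0 ∧ p.2 ≠ 0}
def Omeg : Set (ℝ × ℝ) := {p | p ≠ 0}

def ratLines (σ : ℝ ≃ ℝ) : Set (Set (ℝ × ℝ)) :=
  {{p : ℝ × ℝ | p.2 = 0}, {p : ℝ × ℝ | p.1 = 0}} ∪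
  ((fun w : Function.End (ℝ × ℝ) => w '' {p : ℝ × ℝ | p.2 = 0}) ''
    ↑(Submonoid.closure {(⇑(hmap σ) : Function.End (ℝ × ℝ)), ⇑(vmap σ)} : Submonoid (Function.End (ℝ × ℝ)))) ∪
  ((fun w : Function.End (ℝ × ℝ) => w '' {p : ℝ × ℝ | p.1 = 0}) ''
    ↑(Submonoid.closure {(⇑(hmap σ).symm : Function.End (ℝ × ℝ)), ⇑(vmap σ).symm} : Submonoid (Function.End (ℝ × ℝ))))

def Pset (σ : ℝ ≃ ℝ) : Set (ℝ × ℝ) := ⇑(hmap σ).symm '' Yset ∪ ⇑(hmap σ) '' Xset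
def Qset (σ : ℝ ≃ ℝ) : Set (ℝ × ℝ) := ⇑(vmap σ) '' Xset ∪ ⇑(vmap σ).symm '' Yset

lemma vmap_apply (σ : ℝ ≃ ℝ) (p : ℝ × ℝ) : vmap σ p = (p.1, p.2 + σ p.1) := rfl
lemma vmap_symm_apply (σ : ℝ ≃ ℝ) (p : ℝ × ℝ) : (vmap σ).symm p = (p.1, p.2 - σ p.1) := rfl
lemma hmap_apply (σ : ℝ ≃ ℝ) (p : ℝ × ℝ) : hmap σ p = (p.1 + σ.symm p.2, p.2) := rfl
lemma hmap_symm_apply (σ : ℝ ≃ ℝ) (p : ℝ × ℝ) : (hmap σ).symm p = (p.1 - σ.symm p.2, p.2) := rfl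

lemma vmap_zpow (σ : ℝ ≃ ℝ) (n : ℤ) :
    ∀ p : ℝ × ℝ, ((vmap σ : Equiv.Perm (ℝ × ℝ)) ^ n) p = (p.1, p.2 + (n : ℝ) * σ p.1) := by
  induction n using Int.induction_on with
  | zero => intro p; simp
  | succ k ih =>
      intro p
      rw [zpow_add_one, Equiv.Perm.mul_apply, ih, vmap_apply]
      simp only [Prod.mk.injEq]
      push_cast
      ring_nf
      exact ⟨trivial, trivial⟩
  | pred k ih =>
      intro p
      rw [zpow_sub_one, Equiv.Perm.mul_apply, ih, Equiv.Perm.inv_def, vmap_symm_apply]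
      simp only [Prod.mk.injEq]
      push_cast
      ring_nf
      exact ⟨trivial, trivial⟩

lemma hmap_zpow (σ : ℝ ≃ ℝ) (n : ℤ) :
    ∀ p : ℝ × ℝ, ((hmap σ : Equiv.Perm (ℝ × ℝ)) ^ n) p = (p.1 + (n : ℝ) * σ.symm p.2, p.2) := by
  induction n using Int.induction_on with
  | zero => intro p; simp
  | succ k ih =>
      intro p
      rw [zpow_add_one, Equiv.Perm.mul_apply, ih, hmap_apply]
      simp only [Prod.mk.injEq]
      push_cast
      ring_nf
      exact ⟨trivial, trivial⟩
  | pred k ih =>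
      intro p
      rw [zpow_sub_one, Equiv.Perm.mul_apply, ih, Equiv.Perm.inv_def, hmap_symm_apply]
      simp only [Prod.mk.injEq]
      push_cast
      ring_nf
      exact ⟨trivial, trivial⟩

lemma mem_Pset (σ : ℝ ≃ ℝ) (p : ℝ × ℝ) :
    p ∈ ((hmap σ).symm '' Yset ∪ (hmap σ) '' Xset) ↔
      ((p.1 + σ.symm p.2) * p.2 ≤ 0 ∧ p.2 ≠ 0) ∨
        (0 ≤ (p.1 - σ.symm p.2) * p.2 ∧ p.1 - σ.symm p.2 ≠ 0) := by
  rw [Set.mem_union, Set.mem_image_equiv, Set.mem_image_equiv, Equiv.symm_symm]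
  constructor
  · rintro (⟨_, h2, h3⟩ | ⟨_, h2, h3⟩)
    · exact Or.inl ⟨h2, h3⟩
    · exact Or.inr ⟨h2, h3⟩
  · rintro (⟨h2, h3⟩ | ⟨h2, h3⟩)
    · exact Or.inl ⟨fun h => h3 (congrArg Prod.snd h), h2, h3⟩
    · exact Or.inr ⟨fun h => h3 (congrArg Prod.fst h), h2, h3⟩

lemma mem_Qset (σ : ℝ ≃ ℝ) (p : ℝ × ℝ) :
    p ∈ ((vmap σ) '' Xset ∪ (vmap σ).symm '' Yset) ↔
      (0 ≤ p.1 * (p.2 - σ p.1) ∧ p.1 ≠ 0) ∨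
        (p.1 * (p.2 + σ p.1) ≤ 0 ∧ p.2 + σ p.1 ≠ 0) := by
  rw [Set.mem_union, Set.mem_image_equiv, Set.mem_image_equiv, Equiv.symm_symm]
  constructor
  · rintro (⟨_, h2, h3⟩ | ⟨_, h2, h3⟩)
    · exact Or.inl ⟨h2, h3⟩
    · exact Or.inr ⟨h2, h3⟩
  · rintro (⟨h2, h3⟩ | ⟨h2, h3⟩)
    · exact Or.inl ⟨fun h => h3 (congrArg Prod.fst h), h2, h3⟩
    · exact Or.inr ⟨fun h => h3 (congrArg Prod.snd h), h2, h3⟩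

lemma leaf_v_pos (n a b F : ℝ) (hn : 2 ≤ n ∨ n ≤ -2) (ha : 0 < a) (h1 : -b ≤ F) (h2 : b < F) :
    (0 ≤ a * ((b + n * F) - F) ∧ a ≠ 0) ∨
      (a * ((b + n * F) + F) ≤ 0 ∧ (b + n * F) + F ≠ 0) := by
  have hF : 0 < F := by linarith
  rcases hn with hn | hn
  · left
    have h3 : 0 ≤ b + n * F - F := by
      nlinarith [mul_nonneg (by linarith : (0:ℝ) ≤ n - 2) hF.le]
    exact ⟨mul_nonneg ha.le h3, ha.ne'⟩
  · right
    have h3 : b + n * F + F < 0 := by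
      nlinarith [mul_nonneg (by linarith : (0:ℝ) ≤ -(n + 2)) hF.le]
    exact ⟨(mul_neg_of_pos_of_neg ha h3).le, h3.ne⟩

lemma leaf_v_neg (n a b F : ℝ) (hn : 2 ≤ n ∨ n ≤ -2) (ha : a < 0) (h1 : F ≤ -b) (h2 : F < b) :
    (0 ≤ a * ((b + n * F) - F) ∧ a ≠ 0) ∨
      (a * ((b + n * F) + F) ≤ 0 ∧ (b + n * F) + F ≠ 0) := by
  have hF : F < 0 := by linarith
  rcases hn with hn | hn
  · left
    have h3 : b + n * F - F ≤ 0 := by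
      nlinarith [mul_nonneg (by linarith : (0:ℝ) ≤ n - 2) (by linarith : (0:ℝ) ≤ -F)]
    refine ⟨?_, ha.ne⟩
    nlinarith [mul_nonneg (by linarith : (0:ℝ) ≤ -a) (by linarith : (0:ℝ) ≤ -(b + n * F - F))]
  · right
    have h3 : 0 < b + n * F + F := by
      nlinarith [mul_nonneg (by linarith : (0:ℝ) ≤ -(n + 2)) (by linarith : (0:ℝ) ≤ -F)]
    exact ⟨(mul_neg_of_neg_of_pos ha h3).le, h3.ne'⟩

lemma leaf_h_pos (n a b G : ℝ) (hn : 2 ≤ n ∨ n ≤ -2) (hb : 0 < b) (h1 : a ≤ G) (h2 : -a < G) :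
    (((a + n * G) + G) * b ≤ 0 ∧ b ≠ 0) ∨
      (0 ≤ ((a + n * G) - G) * b ∧ (a + n * G) - G ≠ 0) := by
  have hG : 0 < G := by linarith
  rcases hn with hn | hn
  · right
    have h3 : 0 < a + n * G - G := by
      nlinarith [mul_nonneg (by linarith : (0:ℝ) ≤ n - 2) hG.le]
    exact ⟨(mul_pos h3 hb).le, h3.ne'⟩
  · left
    have h3 : a + n * G + G ≤ 0 := by
      nlinarith [mul_nonneg (by linarith : (0:ℝ) ≤ -(n + 2)) hG.le]
    exact ⟨mul_nonpos_iff.mpr (Or.inr ⟨h3, hb.le⟩), hb.ne'⟩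

lemma leaf_h_neg (n a b G : ℝ) (hn : 2 ≤ n ∨ n ≤ -2) (hb : b < 0) (h1 : G ≤ a) (h2 : G < -a) :
    (((a + n * G) + G) * b ≤ 0 ∧ b ≠ 0) ∨
      (0 ≤ ((a + n * G) - G) * b ∧ (a + n * G) - G ≠ 0) := by
  have hG : G < 0 := by linarith
  rcases hn with hn | hn
  · right
    have h3 : a + n * G - G < 0 := by
      nlinarith [mul_nonneg (by linarith : (0:ℝ) ≤ n - 2) (by linarith : (0:ℝ) ≤ -G)]
    exact ⟨(mul_pos_of_neg_of_neg h3 hb).le, h3.ne⟩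
  · left
    have h3 : 0 ≤ a + n * G + G := by
      nlinarith [mul_nonneg (by linarith : (0:ℝ) ≤ -(n + 2)) (by linarith : (0:ℝ) ≤ -G)]
    exact ⟨mul_nonpos_iff.mpr (Or.inl ⟨h3, hb.le⟩), hb.ne⟩

lemma core_v (f g : ℝ → ℝ) (hf : StrictMono f) (hg : StrictMono g)
    (hf0 : f 0 = 0) (hg0 : g 0 = 0)
    (hfo : ∀ x, f (-x) = -f x)
    (hfg : ∀ x, f (g x) = x)
    (n a b : ℝ) (hn : 2 ≤ n ∨ n ≤ -2)
    (H : ((a + g b) * b ≤ 0 ∧ b ≠ 0) ∨ (0 ≤ (a - g b) * b ∧ a - g b ≠ 0)) :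
    (0 ≤ a * ((b + n * f a) - f a) ∧ a ≠ 0) ∨
      (a * ((b + n * f a) + f a) ≤ 0 ∧ (b + n * f a) + f a ≠ 0) := by
  rcases H with ⟨h1, hb⟩ | ⟨h1, ha⟩
  · rcases hb.lt_or_gt with hb | hb
    · -- b < 0
      have hgb : g b < 0 := by have := hg hb; rwa [hg0] at this
      have hab : -g b ≤ a := by nlinarith
      have ha : 0 < a := by linarith
      have hfa : -b ≤ f a := by
        have h2 : f (-g b) ≤ f a := hf.monotone hab
        rwa [hfo, hfg] at h2
      exact leaf_v_pos n a b (f a) hn ha hfa (by linarith)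
    · -- b > 0
      have hgb : 0 < g b := by have := hg hb; rwa [hg0] at this
      have hab : a ≤ -g b := by nlinarith
      have ha : a < 0 := by linarith
      have hfa : f a ≤ -b := by
        have h2 : f a ≤ f (-g b) := hf.monotone hab
        rwa [hfo, hfg] at h2
      exact leaf_v_neg n a b (f a) hn ha hfa (by linarith)
  · rcases lt_trichotomy b 0 with hb | hb | hb
    · -- b < 0 : a < g b < 0
      have hgb : g b < 0 := by have := hg hb; rwa [hg0] at this
      have hab : a < g b := by
        rcases lt_or_ge a (g b) with h | h
        · exact h
        · exfalso
          have : a - g b ≤ 0 := by nlinarith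
          have : a = g b := by
            rcases eq_or_lt_of_le this with h' | h'
            · linarith [sub_eq_zero.mp h']
            · linarith
          exact ha (by rw [this]; ring)
      have hfa : f a < b := by have := hf hab; rwa [hfg] at this
      exact leaf_v_neg n a b (f a) hn (by linarith) (by linarith) hfa
    · -- b = 0
      subst hb
      rw [hg0] at ha h1
      have ha' : a ≠ 0 := by simpa using ha
      rcases ha'.lt_or_gt with h | h
      · have hfa : f a < 0 := by have := hf h; rwa [hf0] at this
        exact leaf_v_neg n a 0 (f a) hn h (by linarith) hfa
      · have hfa : 0 < f a := by have := hf h; rwa [hf0] at this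
        exact leaf_v_pos n a 0 (f a) hn h (by linarith) hfa
    · -- b > 0 : a > g b > 0
      have hgb : 0 < g b := by have := hg hb; rwa [hg0] at this
      have hab : g b < a := by
        rcases lt_or_ge (g b) a with h | h
        · exact h
        · exfalso
          have h2 : a - g b ≤ 0 := by linarith
          have : a - g b = 0 := by nlinarith
          exact ha this
      have hfa : b < f a := by have := hf hab; rwa [hfg] at this
      exact leaf_v_pos n a b (f a) hn (by linarith) (by linarith) hfa

lemma core_h (f g : ℝ → ℝ) (hf : StrictMono f) (hg : StrictMono g)
    (hf0 : f 0 = 0) (hg0 : g 0 = 0)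
    (hgo : ∀ x, g (-x) = -g x)
    (hgf : ∀ x, g (f x) = x)
    (n a b : ℝ) (hn : 2 ≤ n ∨ n ≤ -2)
    (H : (0 ≤ a * (b - f a) ∧ a ≠ 0) ∨ (a * (b + f a) ≤ 0 ∧ b + f a ≠ 0)) :
    (((a + n * g b) + g b) * b ≤ 0 ∧ b ≠ 0) ∨
      (0 ≤ ((a + n * g b) - g b) * b ∧ (a + n * g b) - g b ≠ 0) := by
  rcases H with ⟨h1, ha⟩ | ⟨h1, hb⟩
  · rcases ha.lt_or_gt with ha | ha
    · -- a < 0 : b ≤ f a < 0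
      have hfa : f a < 0 := by have := hf ha; rwa [hf0] at this
      have hba : b ≤ f a := by nlinarith
      have hgb : g b ≤ a := by
        have h2 : g b ≤ g (f a) := hg.monotone hba
        rwa [hgf] at h2
      exact leaf_h_neg n a b (g b) hn (by linarith) hgb (by linarith)
    · -- a > 0 : b ≥ f a > 0
      have hfa : 0 < f a := by have := hf ha; rwa [hf0] at this
      have hba : f a ≤ b := by nlinarith
      have hgb : a ≤ g b := by
        have h2 : g (f a) ≤ g b := hg.monotone hba
        rwa [hgf] at h2
      exact leaf_h_pos n a b (g b) hn (by linarith) hgb (by linarith)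
  · rcases lt_trichotomy a 0 with ha | ha | ha
    · -- a < 0 : b > -f a > 0
      have hfa : f a < 0 := by have := hf ha; rwa [hf0] at this
      have hba : -f a < b := by
        rcases lt_or_ge (-f a) b with h | h
        · exact h
        · exfalso
          have : b + f a = 0 := by nlinarith
          exact hb this
      have hgb : -a < g b := by
        have h2 : g (-f a) < g b := hg hba
        rwa [hgo, hgf] at h2
      exact leaf_h_pos n a b (g b) hn (by linarith) (by linarith) hgb
    · -- a = 0
      subst ha
      rw [hf0] at hb
      have hb' : b ≠ 0 := by simpa using hb
      have hg0b : ∀ c : ℝ, c < 0 → g c < 0 := fun c hc => by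
        have := hg hc; rwa [hg0] at this
      rcases hb'.lt_or_gt with h | h
      · have : g b < 0 := hg0b b h
        exact leaf_h_neg n 0 b (g b) hn h (by linarith) (by linarith)
      · have : 0 < g b := by have := hg h; rwa [hg0] at this
        exact leaf_h_pos n 0 b (g b) hn h (by linarith) (by linarith)
    · -- a > 0 : b < -f a < 0
      have hfa : 0 < f a := by have := hf ha; rwa [hf0] at this
      have hba : b < -f a := by
        rcases lt_or_ge b (-f a) with h | h
        · exact h
        · exfalso
          have : b + f a = 0 := by nlinarith
          exact hb this
      have hgb : g b < -a := by
        have h2 : g b < g (-f a) := hg hba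
        rwa [hgo, hgf] at h2
      exact leaf_h_neg n a b (g b) hn (by linarith) (by linarith) hgb

/-- Ping-pong inclusions: v_σ^{2k}(P) ⊆ Q and h_σ^{2l}(Q) ⊆ P for nonzero integers. -/
theorem stmt_4 (σ : ℝ ≃ ℝ) (hmono : StrictMono σ) (hodd : ∀ x : ℝ, σ (-x) = -σ x) :
    (∀ k : ℤ, k ≠ 0 → ⇑((vmap σ : Equiv.Perm (ℝ × ℝ)) ^ (2 * k)) '' Pset σ ⊆ Qset σ) ∧
    (∀ l : ℤ, l ≠ 0 → ⇑((hmap σ : Equiv.Perm (ℝ × ℝ)) ^ (2 * l)) '' Qset σ ⊆ Pset σ) := by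
  have hs0 : σ 0 = 0 := by have h := hodd 0; rw [neg_zero] at h; linarith
  have hsmono : StrictMono σ.symm := fun x y hxy => by
    rw [← hmono.lt_iff_lt]; simpa using hxy
  have hss0 : σ.symm 0 = 0 := by rw [Equiv.symm_apply_eq, hs0]
  have hsodd : ∀ x, σ.symm (-x) = -σ.symm x := fun x =>
    σ.injective (by rw [Equiv.apply_symm_apply, hodd, Equiv.apply_symm_apply])
  constructor
  · intro k hk q hq
    obtain ⟨p, hp, rfl⟩ := hq
    rw [vmap_zpow]
    have hn : (2:ℝ) ≤ ((2 * k : ℤ) : ℝ) ∨ ((2 * k : ℤ) : ℝ) ≤ -2 := by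
      rcases hk.lt_or_gt with h | h
      · right
        have h1 : (k : ℝ) ≤ -1 := by exact_mod_cast (by omega : k ≤ -1)
        push_cast; linarith
      · left
        have h1 : (1 : ℝ) ≤ (k : ℝ) := by exact_mod_cast (by omega : 1 ≤ k)
        push_cast; linarith
    exact (mem_Qset σ _).mpr
      (core_v σ σ.symm hmono hsmono hs0 hss0 hodd (fun x => σ.apply_symm_apply x)
        ((2 * k : ℤ) : ℝ) p.1 p.2 hn ((mem_Pset σ p).mp hp))
  · intro k hk q hq
    obtain ⟨p, hp, rfl⟩ := hq
    rw [hmap_zpow]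
    have hn : (2:ℝ) ≤ ((2 * k : ℤ) : ℝ) ∨ ((2 * k : ℤ) : ℝ) ≤ -2 := by
      rcases hk.lt_or_gt with h | h
      · right
        have h1 : (k : ℝ) ≤ -1 := by exact_mod_cast (by omega : k ≤ -1)
        push_cast; linarith
      · left
        have h1 : (1 : ℝ) ≤ (k : ℝ) := by exact_mod_cast (by omega : 1 ≤ k)
        push_cast; linarith
    exact (mem_Pset σ _).mpr
      (core_h σ σ.symm hmono hsmono hs0 hss0 hsodd (fun x => σ.symm_apply_apply x)
        ((2 * k : ℤ) : ℝ) p.1 p.2 hn ((mem_Qset σ p).mp hp))
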